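/- arXiv:2603.07033 — 2 statements merged into one kernel-verified Lean document; each statement's English description precedes it below -/
import Mathlib

section
/- Let K be an algebraically closed field of characteristic zero and let sl₂(K[[t]]) denote the Lie algebra of 2×2 matrices of trace zero over the formal power series ring K[[t]], with bracket [X,Y] = XY − YX. Then the bracket width of sl₂(K[[t]]) is equal to 1: every element Z of sl₂(K[[t]]) can be written as a single bracket Z = [X,Y] with X, Y ∈ sl₂(K[[t]]). -/
open Matrix

/-- Key algebraic lemma: over a commutative ring where `2` is invertible, a trace-zero
`2×2` matrix `!![a,b;c,-a]` with one of `a`, `b`, `c` invertible is a single bracket of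
trace-zero matrices. -/
lemma key_bracket {R : Type*} [CommRing R] (a b c h v : R) (hh : 2 * h = 1)
    (hv : v * a = 1 ∨ v * b = 1 ∨ v * c = 1) :
    ∃ X Y : Matrix (Fin 2) (Fin 2) R, X.trace = 0 ∧ Y.trace = 0 ∧
      X * Y - Y * X = !![a, b; c, -a] := by
  rcases hv with hv | hv | hv
  · refine ⟨!![-(c*h), a; 0, c*h], !![-(b*h*v), 0; 1, b*h*v], ?_, ?_, ?_⟩
    · simp [Matrix.trace_fin_two]
    · simp [Matrix.trace_fin_two]
    · ext i j
      fin_cases i <;> fin_cases j <;>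
        simp [Matrix.mul_apply, Fin.sum_univ_two] <;>
        (first | ring1 | linear_combination a*b*v*hh + b*hv | linear_combination c*hh)
  · refine ⟨!![0, 1; -(c*v), 0], !![-(b*h), 0; a, b*h], ?_, ?_, ?_⟩
    · simp [Matrix.trace_fin_two]
    · simp [Matrix.trace_fin_two]
    · ext i j
      fin_cases i <;> fin_cases j <;>
        simp [Matrix.mul_apply, Fin.sum_univ_two] <;>
        (first | ring1 | linear_combination b*hh | linear_combination c*v*b*hh + c*hv)
  · refine ⟨!![0, -(b*v); 1, 0], !![c*h, -a; 0, -(c*h)], ?_, ?_, ?_⟩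
    · simp [Matrix.trace_fin_two]
    · simp [Matrix.trace_fin_two]
    · ext i j
      fin_cases i <;> fin_cases j <;>
        simp [Matrix.mul_apply, Fin.sum_univ_two] <;>
        (first | ring1 | linear_combination b*v*c*hh + b*hv | linear_combination c*hh)

/-- (Kunyavskii et al.) Over an algebraically closed field `K` of characteristic zero,
the bracket width of `sl₂(K[[t]])` is `1`: every trace-zero `2×2` matrix over the formal
power series ring `K[[t]]` is a single bracket of two elements of `sl₂(K[[t]])`. -/
theorem bracket_width_sl2_power_series
    (K : Type*) [Field K] [IsAlgClosed K] [CharZero K] :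
    ∀ Z : LieAlgebra.SpecialLinear.sl (Fin 2) (PowerSeries K),
      ∃ X Y : LieAlgebra.SpecialLinear.sl (Fin 2) (PowerSeries K), Z = ⁅X, Y⁆ := by
  intro Z
  obtain ⟨M, hM⟩ := Z
  have htr : Matrix.trace M = 0 := hM
  suffices h : ∃ X Y : Matrix (Fin 2) (Fin 2) (PowerSeries K),
      X.trace = 0 ∧ Y.trace = 0 ∧ X * Y - Y * X = M by
    obtain ⟨X, Y, hX, hY, hXY⟩ := h
    exact ⟨⟨X, hX⟩, ⟨Y, hY⟩, Subtype.ext hXY.symm⟩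
  set a := M 0 0 with ha
  set b := M 0 1 with hb
  set c := M 1 0 with hc
  rw [Matrix.trace_fin_two] at htr
  have h11 : M 1 1 = -a := eq_neg_of_add_eq_zero_right htr
  have hM2 : M = !![a, b; c, -a] := by
    rw [← h11]
    exact Matrix.eta_fin_two M
  have hh : (2 : PowerSeries K) * PowerSeries.C (2⁻¹ : K) = 1 := by
    rw [show ((2 : PowerSeries K) = PowerSeries.C 2) from (map_ofNat (PowerSeries.C (R := K)) 2).symm,
      ← _root_.map_mul]
    norm_num
  by_cases h0 : a = 0 ∧ b = 0 ∧ c = 0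
  · refine ⟨0, 0, by simp, by simp, ?_⟩
    rw [hM2, h0.1, h0.2.1, h0.2.2]
    simp [Matrix.eta_fin_two (0 : Matrix (Fin 2) (Fin 2) (PowerSeries K))]
  · have hex : ∃ n, PowerSeries.coeff n a ≠ 0 ∨ PowerSeries.coeff n b ≠ 0 ∨
        PowerSeries.coeff n c ≠ 0 := by
      by_contra hcon
      push_neg at hcon
      exact h0 ⟨PowerSeries.ext fun n => (hcon n).1,
        PowerSeries.ext fun n => (hcon n).2.1, PowerSeries.ext fun n => (hcon n).2.2⟩
    classical
    set k := Nat.find hex with hk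
    have hmin : ∀ m < k, PowerSeries.coeff m a = 0 ∧ PowerSeries.coeff m b = 0 ∧
        PowerSeries.coeff m c = 0 := by
      intro m hm
      have := Nat.find_min hex hm
      push_neg at this
      exact this
    obtain ⟨a', ha'⟩ : (PowerSeries.X : PowerSeries K) ^ k ∣ a :=
      PowerSeries.X_pow_dvd_iff.2 fun m hm => (hmin m hm).1
    obtain ⟨b', hb'⟩ : (PowerSeries.X : PowerSeries K) ^ k ∣ b :=
      PowerSeries.X_pow_dvd_iff.2 fun m hm => (hmin m hm).2.1
    obtain ⟨c', hc'⟩ : (PowerSeries.X : PowerSeries K) ^ k ∣ c :=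
      PowerSeries.X_pow_dvd_iff.2 fun m hm => (hmin m hm).2.2
    have hcoeff : ∀ f f' : PowerSeries K, f = PowerSeries.X ^ k * f' →
        PowerSeries.coeff k f = PowerSeries.constantCoeff f' := by
      intro f f' hf
      have h2 := PowerSeries.coeff_X_pow_mul f' k 0
      rw [Nat.zero_add] at h2
      rw [hf, h2, PowerSeries.coeff_zero_eq_constantCoeff]
    have hunit : IsUnit a' ∨ IsUnit b' ∨ IsUnit c' := by
      rcases Nat.find_spec hex with h | h | h
      · exact Or.inl (PowerSeries.isUnit_iff_constantCoeff.2
          (isUnit_iff_ne_zero.2 (by rw [← hcoeff a a' ha']; exact h)))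
      · exact Or.inr (Or.inl (PowerSeries.isUnit_iff_constantCoeff.2
          (isUnit_iff_ne_zero.2 (by rw [← hcoeff b b' hb']; exact h))))
      · exact Or.inr (Or.inr (PowerSeries.isUnit_iff_constantCoeff.2
          (isUnit_iff_ne_zero.2 (by rw [← hcoeff c c' hc']; exact h))))
    have hv : ∃ v : PowerSeries K, v * a' = 1 ∨ v * b' = 1 ∨ v * c' = 1 := by
      rcases hunit with ⟨u, hu⟩ | ⟨u, hu⟩ | ⟨u, hu⟩
      · exact ⟨↑u⁻¹, Or.inl (by rw [← hu]; exact u.inv_mul)⟩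
      · exact ⟨↑u⁻¹, Or.inr (Or.inl (by rw [← hu]; exact u.inv_mul))⟩
      · exact ⟨↑u⁻¹, Or.inr (Or.inr (by rw [← hu]; exact u.inv_mul))⟩
    obtain ⟨v, hv⟩ := hv
    obtain ⟨X, Y, hX, hY, hXY⟩ := key_bracket a' b' c' (PowerSeries.C (2⁻¹ : K)) v hh hv
    refine ⟨X, (PowerSeries.X ^ k : PowerSeries K) • Y, hX, by
      rw [Matrix.trace_smul, hY, smul_zero], ?_⟩
    rw [Matrix.mul_smul, Matrix.smul_mul, ← smul_sub, hXY, hM2]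
    ext i j
    fin_cases i <;> fin_cases j <;>
      simp [ha', hb', hc', smul_eq_mul, mul_comm, mul_neg]
end

section
/- Let n > 2 and suppose f is a 2-central polynomial for M_n(ℂ), i.e., f² is a central polynomial of M_n(ℂ) but f itself is not a central polynomial and not a polynomial identity of M_n(ℂ). Then the width of f in M_n(ℂ) is at least 3: there exists an element of the ℂ-linear span of f(M_n(ℂ)) that cannot be written as a linear combination of two elements of f(M_n(ℂ)). -/
open Matrix

namespace BresarSemrlAux

variable {n : ℕ}

/-! ### Center of the matrix algebra -/

lemma central_eq_smul_one (hn : 0 < n) {z : Matrix (Fin n) (Fin n) ℂ}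
    (hz : z ∈ Set.center (Matrix (Fin n) (Fin n) ℂ)) :
    ∃ c : ℂ, z = c • (1 : Matrix (Fin n) (Fin n) ℂ) := by
  have hcomm : ∀ g : Matrix (Fin n) (Fin n) ℂ, g * z = z * g :=
    fun g => Semigroup.mem_center_iff.mp hz g
  have key : ∀ i j l : Fin n, z j l = if l = j then z i i else 0 := by
    intro i j l
    have h := congrFun (congrFun (hcomm (Matrix.single i j (1 : ℂ))) i) l
    rw [Matrix.single_mul_apply_same, one_mul] at h
    by_cases hl : l = j
    · subst hl
      rw [Matrix.mul_single_apply_same, mul_one] at h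
      simp [h]
    · rw [Matrix.mul_single_apply_of_ne _ _ _ _ _ hl] at h
      simp [hl, h]
  have i0 : Fin n := ⟨0, hn⟩
  refine ⟨z i0 i0, ?_⟩
  ext a b
  rw [key i0 a b]
  by_cases hab : b = a
  · subst hab
    simp [Matrix.one_apply]
  · simp [Matrix.one_apply, hab, Ne.symm hab]

lemma central_of_scalar_form {z : Matrix (Fin n) (Fin n) ℂ}
    (hoff : ∀ i j, i ≠ j → z i j = 0) (hdiag : ∀ i j, z i i = z j j) (hn : 0 < n) :
    z ∈ Set.center (Matrix (Fin n) (Fin n) ℂ) := by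
  have i0 : Fin n := ⟨0, hn⟩
  have hzform : z = z i0 i0 • (1 : Matrix (Fin n) (Fin n) ℂ) := by
    ext a b
    by_cases hab : a = b
    · subst hab
      simp [Matrix.one_apply, hdiag a i0]
    · simp [Matrix.one_apply, hab, hoff a b hab]
  rw [hzform]
  exact Semigroup.mem_center_iff.mpr fun g => by
    simp [Matrix.mul_smul, Matrix.smul_mul]

/-! ### Conjugation invariance of the span of the image -/

noncomputable def conjHom (u v : Matrix (Fin n) (Fin n) ℂ) (hvu : v * u = 1) :
    Matrix (Fin n) (Fin n) ℂ →ₐ[ℂ] Matrix (Fin n) (Fin n) ℂ where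
  toFun x := u * x * v
  map_one' := by
    show u * 1 * v = 1
    rw [mul_one]; exact mul_eq_one_comm.mp hvu
  map_mul' x y := by
    show u * (x * y) * v = u * x * v * (u * y * v)
    have h1 : u * x * v * (u * y * v) = u * x * (v * u) * (y * v) := by noncomm_ring
    rw [h1, hvu, mul_one]; noncomm_ring
  map_zero' := by simp
  map_add' x y := by show u * (x + y) * v = u * x * v + u * y * v; noncomm_ring
  commutes' c := by
    show u * algebraMap ℂ (Matrix (Fin n) (Fin n) ℂ) c * v = _
    rw [Algebra.algebraMap_eq_smul_one, Matrix.mul_smul, mul_one, Matrix.smul_mul,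
      mul_eq_one_comm.mp hvu]

lemma algHom_lift (φ : Matrix (Fin n) (Fin n) ℂ →ₐ[ℂ] Matrix (Fin n) (Fin n) ℂ)
    (a : ℕ → Matrix (Fin n) (Fin n) ℂ) (f : FreeAlgebra ℂ ℕ) :
    φ (FreeAlgebra.lift ℂ a f) = FreeAlgebra.lift ℂ (fun i => φ (a i)) f := by
  have h : φ.comp (FreeAlgebra.lift ℂ a) = FreeAlgebra.lift ℂ (fun i => φ (a i)) := by
    apply FreeAlgebra.hom_ext
    funext i
    simp
  exact DFunLike.congr_fun h f

def Img (n : ℕ) (f : FreeAlgebra ℂ ℕ) : Set (Matrix (Fin n) (Fin n) ℂ) :=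
  {x | ∃ a : ℕ → Matrix (Fin n) (Fin n) ℂ, FreeAlgebra.lift ℂ a f = x}

noncomputable def Sp (n : ℕ) (f : FreeAlgebra ℂ ℕ) :
    Submodule ℂ (Matrix (Fin n) (Fin n) ℂ) :=
  Submodule.span ℂ (Img n f)

variable (f : FreeAlgebra ℂ ℕ)

lemma Img_conj {u v x : Matrix (Fin n) (Fin n) ℂ} (hvu : v * u = 1)
    (hx : x ∈ Img n f) : u * x * v ∈ Img n f := by
  obtain ⟨a, rfl⟩ := hx
  exact ⟨fun i => u * a i * v, (algHom_lift (conjHom u v hvu) a f).symm⟩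

lemma Sp_conj {u v x : Matrix (Fin n) (Fin n) ℂ} (hvu : v * u = 1)
    (hx : x ∈ Sp n f) : u * x * v ∈ Sp n f := by
  induction hx using Submodule.span_induction with
  | mem y hy => exact Submodule.subset_span (Img_conj f hvu hy)
  | zero => simp
  | add a b _ _ ha hb =>
      have h : u * (a + b) * v = u * a * v + u * b * v := by noncomm_ring
      rw [h]; exact Submodule.add_mem _ ha hb
  | smul c a _ ha =>
      have h : u * (c • a) * v = c • (u * a * v) := by
        rw [Matrix.mul_smul, Matrix.smul_mul]
      rw [h]; exact Submodule.smul_mem _ _ ha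

lemma Sp_ops {i j : Fin n} (hij : i ≠ j) {w : Matrix (Fin n) (Fin n) ℂ}
    (hw : w ∈ Sp n f) :
    Matrix.single i j (1:ℂ) * w * Matrix.single i j (1:ℂ) ∈ Sp n f ∧
    Matrix.single i j (1:ℂ) * w - w * Matrix.single i j (1:ℂ) ∈ Sp n f := by
  set E := Matrix.single i j (1:ℂ) with hE
  have hE2 : E * E = 0 := Matrix.single_mul_single_of_ne (1:ℂ) i j i hij.symm 1
  have h1 : (1 + E) * (1 - E) = 1 := by
    have h : (1 + E) * (1 - E) = 1 - E * E := by noncomm_ring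
    rw [h, hE2, sub_zero]
  have h2 : (1 - E) * (1 + E) = 1 := by
    have h : (1 - E) * (1 + E) = 1 - E * E := by noncomm_ring
    rw [h, hE2, sub_zero]
  have c1 : (1 + E) * w * (1 - E) ∈ Sp n f := Sp_conj f h2 hw
  have c2 : (1 - E) * w * (1 + E) ∈ Sp n f := Sp_conj f h1 hw
  constructor
  · have key : E * w * E
        = (2⁻¹ : ℂ) • ((w + w) - ((1 + E) * w * (1 - E) + (1 - E) * w * (1 + E))) := by
      have expand : (1 + E) * w * (1 - E) + (1 - E) * w * (1 + E)
          = (w + w) - (E * w * E + E * w * E) := by noncomm_ring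
      rw [expand, sub_sub_cancel]
      module
    rw [key]
    exact Submodule.smul_mem _ _
      (Submodule.sub_mem _ (Submodule.add_mem _ hw hw) (Submodule.add_mem _ c1 c2))
  · have key : E * w - w * E
        = (2⁻¹ : ℂ) • ((1 + E) * w * (1 - E) - (1 - E) * w * (1 + E)) := by
      have expand : (1 + E) * w * (1 - E) - (1 - E) * w * (1 + E)
          = (E * w - w * E) + (E * w - w * E) := by noncomm_ring
      rw [expand]
      module
    rw [key]
    exact Submodule.smul_mem _ _ (Submodule.sub_mem _ c1 c2)

/-! ### From a noncentral value to a single matrix unit in the span -/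

lemma exists_basis_in (hn : 0 < n) {v : Matrix (Fin n) (Fin n) ℂ} (hv : v ∈ Img n f)
    (hnc : v ∉ Set.center (Matrix (Fin n) (Fin n) ℂ)) :
    ∃ i j : Fin n, i ≠ j ∧ Matrix.single i j (1:ℂ) ∈ Sp n f := by
  have hvW : v ∈ Sp n f := Submodule.subset_span hv
  by_cases hoff : ∃ p q, p ≠ q ∧ v p q ≠ 0
  · obtain ⟨p, q, hpq, hvpq⟩ := hoff
    refine ⟨q, p, Ne.symm hpq, ?_⟩
    have h := (Sp_ops f (Ne.symm hpq) hvW).1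
    have hcalc : Matrix.single q p (1:ℂ) * v * Matrix.single q p (1:ℂ)
        = v p q • Matrix.single q p (1:ℂ) := by
      ext a b
      by_cases hb : b = p
      · rw [hb]
        rw [Matrix.mul_single_apply_same]
        by_cases ha : a = q
        · rw [ha]
          rw [Matrix.single_mul_apply_same]
          simp [Matrix.smul_apply]
        · rw [Matrix.single_mul_apply_of_ne _ _ _ _ _ ha]
          have h0 : Matrix.single q p (v p q) a p = 0 :=
            Matrix.single_apply_of_ne _ _ _ _ _ (fun hc => ha hc.1.symm)
          simp only [Matrix.smul_single, smul_eq_mul, mul_one]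
          rw [h0]
      · rw [Matrix.mul_single_apply_of_ne _ _ _ _ _ hb]
        have h0 : Matrix.single q p (v p q) a b = 0 :=
          Matrix.single_apply_of_ne _ _ _ _ _ (fun hc => hb hc.2.symm)
        simp only [Matrix.smul_single, smul_eq_mul, mul_one]
        rw [h0]
    rw [hcalc] at h
    have h2 := Submodule.smul_mem (Sp n f) (v p q)⁻¹ h
    rwa [smul_smul, inv_mul_cancel₀ hvpq, one_smul] at h2
  · push_neg at hoff
    have hdiag : ∃ k l, v k k ≠ v l l := by
      by_contra hcon
      push_neg at hcon
      exact hnc (central_of_scalar_form hoff hcon hn)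
    obtain ⟨k, l, hkl⟩ := hdiag
    have hkl' : k ≠ l := fun h => hkl (by rw [h])
    refine ⟨k, l, hkl', ?_⟩
    have h := (Sp_ops f hkl' hvW).2
    have hcalc : Matrix.single k l (1:ℂ) * v - v * Matrix.single k l (1:ℂ)
        = (v l l - v k k) • Matrix.single k l (1:ℂ) := by
      ext a b
      rw [Matrix.sub_apply]
      simp only [Matrix.smul_single, smul_eq_mul, mul_one]
      by_cases ha : a = k
      · rw [ha]
        rw [Matrix.single_mul_apply_same, one_mul]
        by_cases hb : b = l
        · rw [hb]
          rw [Matrix.mul_single_apply_same, mul_one]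
          rw [Matrix.single_apply_same]
        · rw [Matrix.mul_single_apply_of_ne _ _ _ _ _ hb]
          have h0 : Matrix.single k l (v l l - v k k) k b = 0 :=
            Matrix.single_apply_of_ne _ _ _ _ _ (fun hc => hb hc.2.symm)
          rw [h0, hoff l b (fun hc => hb hc.symm), sub_zero]
      · rw [Matrix.single_mul_apply_of_ne _ _ _ _ _ ha]
        have h0 : Matrix.single k l (v l l - v k k) a b = 0 :=
          Matrix.single_apply_of_ne _ _ _ _ _ (fun hc => ha hc.1.symm)
        rw [h0]
        by_cases hb : b = l
        · subst hb
          rw [Matrix.mul_single_apply_same, mul_one,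
            hoff a k (fun hc => ha hc), zero_sub, neg_zero]
        · rw [Matrix.mul_single_apply_of_ne _ _ _ _ _ hb, zero_sub, neg_zero]
    rw [hcalc] at h
    have h2 := Submodule.smul_mem (Sp n f) (v l l - v k k)⁻¹ h
    rwa [smul_smul, inv_mul_cancel₀ (sub_ne_zero.mpr (Ne.symm hkl)), one_smul] at h2

/-! ### Generating all matrix units -/

lemma exists_ne_pair (hn3 : 3 ≤ n) (i j : Fin n) : ∃ c : Fin n, c ≠ i ∧ c ≠ j := by
  by_contra hcon
  push_neg at hcon
  have hsub : (Finset.univ : Finset (Fin n)) ⊆ {i, j} := by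
    intro c _
    rcases eq_or_ne c i with h | h
    · simp [h]
    · simp [hcon c h]
  have h1 := Finset.card_le_card hsub
  have h2 : ({i, j} : Finset (Fin n)).card ≤ 2 := by
    classical
    calc ({i, j} : Finset (Fin n)).card ≤ ({j} : Finset (Fin n)).card + 1 :=
          Finset.card_insert_le _ _
      _ ≤ 2 := by simp
  simp [Finset.card_univ] at h1
  omega

lemma gen_all (hn3 : 3 ≤ n) {i j : Fin n} (hij : i ≠ j)
    (hE : Matrix.single i j (1:ℂ) ∈ Sp n f) :
    ∀ p q : Fin n, p ≠ q → Matrix.single p q (1:ℂ) ∈ Sp n f := by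
  have H1 : ∀ a b c : Fin n, a ≠ b → c ≠ a → c ≠ b →
      Matrix.single a b (1:ℂ) ∈ Sp n f → Matrix.single c b (1:ℂ) ∈ Sp n f := by
    intro a b c hab hca hcb hW
    have h := (Sp_ops f hca hW).2
    have e1 : Matrix.single c a (1:ℂ) * Matrix.single a b (1:ℂ)
        = Matrix.single c b (1:ℂ) := by
      rw [Matrix.single_mul_single_same, one_mul]
    have e2 : Matrix.single a b (1:ℂ) * Matrix.single c a (1:ℂ) = 0 :=
      Matrix.single_mul_single_of_ne _ _ _ _ (Ne.symm hcb) _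
    rwa [e1, e2, sub_zero] at h
  have H2 : ∀ a b c : Fin n, a ≠ b → c ≠ a → c ≠ b →
      Matrix.single a b (1:ℂ) ∈ Sp n f → Matrix.single a c (1:ℂ) ∈ Sp n f := by
    intro a b c hab hca hcb hW
    have h := (Sp_ops f (Ne.symm hcb) hW).2
    have e1 : Matrix.single b c (1:ℂ) * Matrix.single a b (1:ℂ) = 0 :=
      Matrix.single_mul_single_of_ne _ _ _ _ hca _
    have e2 : Matrix.single a b (1:ℂ) * Matrix.single b c (1:ℂ)
        = Matrix.single a c (1:ℂ) := by
      rw [Matrix.single_mul_single_same, one_mul]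
    rw [e1, e2, zero_sub] at h
    simpa using Submodule.neg_mem _ h
  have hswap : Matrix.single j i (1:ℂ) ∈ Sp n f := by
    obtain ⟨c, hci, hcj⟩ := exists_ne_pair hn3 i j
    have hcb : Matrix.single c j (1:ℂ) ∈ Sp n f := H1 i j c hij hci hcj hE
    have hca : Matrix.single c i (1:ℂ) ∈ Sp n f := H2 c j i hcj (Ne.symm hci) hij hcb
    exact H1 c i j hci (Ne.symm hcj) (Ne.symm hij) hca
  intro p q hpq
  by_cases hpi : p = i
  · subst hpi
    by_cases hqj : q = j
    · subst hqj; exact hE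
    · exact H2 p j q hij (Ne.symm hpq) hqj hE
  · have hpIn : Matrix.single p i (1:ℂ) ∈ Sp n f := by
      by_cases hpj : p = j
      · subst hpj; exact hswap
      · exact H1 j i p (Ne.symm hij) hpj hpi hswap
    by_cases hqi : q = i
    · subst hqi; exact hpIn
    · exact H2 p i q hpi (Ne.symm hpq) hqi hpIn

lemma diag_diff (hn3 : 3 ≤ n) {i j : Fin n} (hij : i ≠ j)
    (hE : Matrix.single i j (1:ℂ) ∈ Sp n f) (p q : Fin n) :
    Matrix.single p p (1:ℂ) - Matrix.single q q (1:ℂ) ∈ Sp n f := by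
  by_cases hpq : p = q
  · subst hpq; simp
  · have hqp : Matrix.single q p (1:ℂ) ∈ Sp n f := gen_all f hn3 hij hE q p (Ne.symm hpq)
    have h := (Sp_ops f hpq hqp).2
    have e1 : Matrix.single p q (1:ℂ) * Matrix.single q p (1:ℂ)
        = Matrix.single p p (1:ℂ) := by
      rw [Matrix.single_mul_single_same, one_mul]
    have e2 : Matrix.single q p (1:ℂ) * Matrix.single p q (1:ℂ)
        = Matrix.single q q (1:ℂ) := by
      rw [Matrix.single_mul_single_same, one_mul]
    rwa [e1, e2] at h

lemma diag_mem (hn : 0 < n) (w : Fin n → ℂ) (hw : ∑ i, w i = 0)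
    (hdiff : ∀ p q : Fin n, Matrix.single p p (1:ℂ) - Matrix.single q q (1:ℂ) ∈ Sp n f) :
    Matrix.diagonal w ∈ Sp n f := by
  have i0 : Fin n := ⟨0, hn⟩
  have hdiagsum : Matrix.diagonal w = ∑ i, w i • Matrix.single i i (1:ℂ) := by
    ext a b
    rw [Matrix.sum_apply]
    by_cases hab : a = b
    · subst hab
      rw [Finset.sum_eq_single a]
      · simp
      · intro i _ hia
        have h0 : Matrix.single i i (1:ℂ) a a = 0 :=
          Matrix.single_apply_of_ne _ _ _ _ _ (fun hc => hia hc.1)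
        simp [h0]
      · simp
    · rw [Matrix.diagonal_apply_ne _ hab]
      symm
      apply Finset.sum_eq_zero
      intro i _
      have h0 : Matrix.single i i (1:ℂ) a b = 0 := by
        by_cases hia : i = a
        · subst hia
          exact Matrix.single_apply_of_ne _ _ _ _ _ (fun hc => hab hc.2)
        · exact Matrix.single_apply_of_ne _ _ _ _ _ (fun hc => hia hc.1)
      simp [h0]
  have hrepr : Matrix.diagonal w
      = ∑ i, w i • (Matrix.single i i (1:ℂ) - Matrix.single i0 i0 (1:ℂ)) := by
    have hsplit : ∑ i, w i • (Matrix.single i i (1:ℂ) - Matrix.single i0 i0 (1:ℂ))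
        = (∑ i, w i • Matrix.single i i (1:ℂ)) - (∑ i, w i) • Matrix.single i0 i0 (1:ℂ) := by
      rw [Finset.sum_smul, ← Finset.sum_sub_distrib]
      apply Finset.sum_congr rfl
      intro i _
      rw [smul_sub]
    rw [hsplit, hw, zero_smul, sub_zero, hdiagsum]
  rw [hrepr]
  exact Submodule.sum_mem _ fun i _ => Submodule.smul_mem _ _ (hdiff i i0)

/-! ### The impossibility of a two-term decomposition -/

lemma no_two_decomp (hn3 : 3 ≤ n) (w : Fin n → ℂ)
    (hd : ∀ i j : Fin n, i ≠ j → w i ≠ w j) (ho : ∀ i j : Fin n, w i + w j ≠ 0)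
    (x y : Matrix (Fin n) (Fin n) ℂ) (α β : ℂ)
    (hx : x * x = α • 1) (hy : y * y = β • 1)
    (hxy : Matrix.diagonal w = x + y) : False := by
  have hyx : y = Matrix.diagonal w - x := by rw [hxy]; abel
  have h3 : Matrix.diagonal w * Matrix.diagonal w - Matrix.diagonal w * x
      - x * Matrix.diagonal w + (α • 1 : Matrix (Fin n) (Fin n) ℂ) = β • 1 := by
    rw [← hx, ← hy, hyx]; noncomm_ring
  have hoff : ∀ i j : Fin n, i ≠ j → x i j = 0 := by
    intro i j hij
    have h := congrFun (congrFun h3 i) j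
    simp only [Matrix.sub_apply, Matrix.add_apply, Matrix.diagonal_mul, Matrix.mul_diagonal,
      Matrix.diagonal_mul_diagonal, Matrix.diagonal_apply_ne _ hij, Matrix.smul_apply,
      Matrix.one_apply_ne hij, smul_zero] at h
    have h' : (w i + w j) * x i j = 0 := by linear_combination -h
    rcases mul_eq_zero.mp h' with h'' | h''
    · exact absurd h'' (ho i j)
    · exact h''
  set ξ : Fin n → ℂ := fun i => x i i with hξdef
  have hxdiag : x = Matrix.diagonal ξ := by
    ext a b
    by_cases hab : a = b
    · subst hab; simp [Matrix.diagonal_apply_eq, hξdef]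
    · rw [Matrix.diagonal_apply_ne _ hab]; exact hoff a b hab
  set η : Fin n → ℂ := fun i => w i - ξ i with hηdef
  have hydiag : y = Matrix.diagonal η := by
    rw [hyx, hxdiag, Matrix.diagonal_sub]
  have hξ : ∀ i, ξ i * ξ i = α := by
    intro i
    have hx' : Matrix.diagonal ξ * Matrix.diagonal ξ = α • 1 := by rw [← hxdiag]; exact hx
    have h := congrFun (congrFun hx' i) i
    simpa [Matrix.diagonal_mul_diagonal, Matrix.smul_apply, Matrix.one_apply_eq] using h
  have hη : ∀ i, η i * η i = β := by
    intro i
    have hy' : Matrix.diagonal η * Matrix.diagonal η = β • 1 := by rw [← hydiag]; exact hy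
    have h := congrFun (congrFun hy' i) i
    simpa [Matrix.diagonal_mul_diagonal, Matrix.smul_apply, Matrix.one_apply_eq] using h
  have hw : ∀ i, w i = ξ i + η i := by intro i; simp [hηdef]
  have pair : ∀ i j : Fin n, i ≠ j →
      (ξ i = ξ j ∧ η i = -η j) ∨ (ξ i = -ξ j ∧ η i = η j) := by
    intro i j hij
    have h1 : ξ i = ξ j ∨ ξ i = -ξ j := mul_self_eq_mul_self_iff.mp (by rw [hξ i, hξ j])
    have h2 : η i = η j ∨ η i = -η j := mul_self_eq_mul_self_iff.mp (by rw [hη i, hη j])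
    rcases h1 with h1 | h1 <;> rcases h2 with h2 | h2
    · exact absurd (by rw [hw i, hw j, h1, h2]) (hd i j hij)
    · exact Or.inl ⟨h1, h2⟩
    · exact Or.inr ⟨h1, h2⟩
    · exact absurd (by rw [hw i, hw j, h1, h2]; ring) (ho i j)
  have ha0 : (0 : ℕ) < n := by omega
  have hb0 : (1 : ℕ) < n := by omega
  have hc0 : (2 : ℕ) < n := by omega
  set a : Fin n := ⟨0, ha0⟩
  set b : Fin n := ⟨1, hb0⟩
  set c : Fin n := ⟨2, hc0⟩
  have hab : a ≠ b := by simp [a, b, Fin.ext_iff]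
  have hac : a ≠ c := by simp [a, c, Fin.ext_iff]
  have hbc : b ≠ c := by simp [b, c, Fin.ext_iff]
  rcases pair a b hab with ⟨h1, h2⟩ | ⟨h1, h2⟩ <;>
    rcases pair a c hac with ⟨h4, h5⟩ | ⟨h4, h5⟩
  · exact hd b c hbc (by linear_combination hw b - hw c + h4 - h1 + h2 - h5)
  · exact ho b c (by linear_combination hw b + hw c + h4 - h1 + h2 - h5)
  · exact ho b c (by linear_combination hw b + hw c + h1 - h4 + h5 - h2)
  · exact hd b c hbc (by linear_combination hw b - hw c + h1 - h4 + h5 - h2)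

/-! ### The trace-zero diagonal witness -/

noncomputable def wvec (n : ℕ) (hn : 0 < n) : Fin n → ℂ :=
  fun i => if i = ⟨0, hn⟩ then 2 - 2 ^ n else 2 ^ (i : ℕ)

lemma two_pow_big (hn3 : 3 ≤ n) : (8:ℕ) ≤ 2 ^ n := by
  calc (8:ℕ) = 2 ^ 3 := by norm_num
    _ ≤ 2 ^ n := Nat.pow_le_pow_right (by norm_num) hn3

lemma no_middle (hn3 : 3 ≤ n) (k : Fin n) : 2 + 2 ^ (k:ℕ) ≠ 2 ^ n := by
  intro h3
  have hk1 : (k:ℕ) ≤ n - 1 := by have := k.isLt; omega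
  have hj1 : 2^(k:ℕ) ≤ 2^(n-1) := Nat.pow_le_pow_right (by norm_num) hk1
  have h5 : (4:ℕ) ≤ 2^(n-1) := by
    calc (4:ℕ) = 2^2 := by norm_num
      _ ≤ 2^(n-1) := Nat.pow_le_pow_right (by norm_num) (by omega)
  have h4 : 2^(n-1) + 2^(n-1) = 2^n := by
    have hn1 : n - 1 + 1 = n := by omega
    calc 2^(n-1) + 2^(n-1) = 2^(n-1) * 2 := by ring
      _ = 2^(n-1+1) := by rw [pow_succ]
      _ = 2^n := by rw [hn1]
  have hcontra : 2^n < 2^n := by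
    calc 2^n = 2 + 2^(k:ℕ) := h3.symm
      _ ≤ 2 + 2^(n-1) := Nat.add_le_add_left hj1 2
      _ < 2^(n-1) + 2^(n-1) := Nat.add_lt_add_right
          (lt_of_lt_of_le (by norm_num : (2:ℕ) < 4) h5) _
      _ = 2^n := h4
  exact Nat.lt_irrefl _ hcontra

lemma wvec_ne (hn3 : 3 ≤ n) : ∀ i j : Fin n, i ≠ j →
    wvec n (by omega) i ≠ wvec n (by omega) j := by
  have hn : 0 < n := by omega
  have hbig := two_pow_big hn3
  intro i j hij heq
  unfold wvec at heq
  by_cases hi : i = (⟨0, hn⟩ : Fin n) <;> by_cases hj : j = (⟨0, hn⟩ : Fin n)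
  · exact hij (hi.trans hj.symm)
  · rw [if_pos hi, if_neg hj] at heq
    have h2 : ((2:ℕ):ℂ) = ((2^(j:ℕ) + 2^n : ℕ):ℂ) := by push_cast; linear_combination heq
    have h3 : (2:ℕ) = 2^(j:ℕ) + 2^n := by exact_mod_cast h2
    have h4 : 2^n ≤ 2 := le_trans (Nat.le_add_left (2^n) (2^(j:ℕ))) h3.ge
    exact absurd (le_trans hbig h4) (by norm_num)
  · rw [if_neg hi, if_pos hj] at heq
    have h2 : ((2:ℕ):ℂ) = ((2^(i:ℕ) + 2^n : ℕ):ℂ) := by push_cast; linear_combination -heq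
    have h3 : (2:ℕ) = 2^(i:ℕ) + 2^n := by exact_mod_cast h2
    have h4 : 2^n ≤ 2 := le_trans (Nat.le_add_left (2^n) (2^(i:ℕ))) h3.ge
    exact absurd (le_trans hbig h4) (by norm_num)
  · rw [if_neg hi, if_neg hj] at heq
    have hnat : (2:ℕ) ^ (i:ℕ) = 2 ^ (j:ℕ) := by exact_mod_cast heq
    exact hij (Fin.ext (Nat.pow_right_injective (le_refl 2) hnat))

lemma wvec_no_opp (hn3 : 3 ≤ n) : ∀ i j : Fin n,
    wvec n (by omega) i + wvec n (by omega) j ≠ 0 := by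
  have hn : 0 < n := by omega
  have hbig := two_pow_big hn3
  intro i j heq
  unfold wvec at heq
  by_cases hi : i = (⟨0, hn⟩ : Fin n) <;> by_cases hj : j = (⟨0, hn⟩ : Fin n)
  · rw [if_pos hi, if_pos hj] at heq
    have h2 : ((4:ℕ):ℂ) = ((2^n + 2^n : ℕ):ℂ) := by push_cast; linear_combination heq
    have h3 : (4:ℕ) = 2^n + 2^n := by exact_mod_cast h2
    have h4 : 2^n ≤ 4 := le_trans (Nat.le_add_left (2^n) (2^n)) h3.ge
    exact absurd (le_trans hbig h4) (by norm_num)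
  · rw [if_pos hi, if_neg hj] at heq
    have h2 : ((2 + 2^(j:ℕ) : ℕ):ℂ) = ((2^n : ℕ):ℂ) := by push_cast; linear_combination heq
    have h3 : 2 + 2^(j:ℕ) = 2^n := by exact_mod_cast h2
    exact no_middle hn3 j h3
  · rw [if_neg hi, if_pos hj] at heq
    have h2 : ((2 + 2^(i:ℕ) : ℕ):ℂ) = ((2^n : ℕ):ℂ) := by push_cast; linear_combination heq
    have h3 : 2 + 2^(i:ℕ) = 2^n := by exact_mod_cast h2
    exact no_middle hn3 i h3
  · rw [if_neg hi, if_neg hj] at heq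
    have h2 : ((2^(i:ℕ) + 2^(j:ℕ) : ℕ):ℂ) = ((0:ℕ):ℂ) := by push_cast; linear_combination heq
    have h3 : 2^(i:ℕ) + 2^(j:ℕ) = 0 := by exact_mod_cast h2
    exact (by positivity : 0 < 2^(i:ℕ) + 2^(j:ℕ)).ne' h3

lemma wvec_sum (hn3 : 3 ≤ n) : ∑ i, wvec n (by omega : 0 < n) i = 0 := by
  have hn : 0 < n := by omega
  have hgeom : ∑ i : Fin n, (2:ℂ)^(i:ℕ) = 2^n - 1 := by
    rw [Fin.sum_univ_eq_sum_range (fun k => (2:ℂ)^k)]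
    rw [geom_sum_eq (by norm_num : (2:ℂ) ≠ 1)]
    norm_num
  have hsplit : ∀ i : Fin n, wvec n hn i
      = (2:ℂ)^(i:ℕ) + (if i = (⟨0, hn⟩ : Fin n) then (2 - 2^n) - 2^((⟨0, hn⟩ : Fin n) : ℕ) else 0) := by
    intro i
    unfold wvec
    by_cases h : i = (⟨0, hn⟩ : Fin n)
    · rw [if_pos h, if_pos h, h]; ring
    · rw [if_neg h, if_neg h, add_zero]
  calc ∑ i, wvec n (by omega : 0 < n) i
      = ∑ i : Fin n, ((2:ℂ)^(i:ℕ)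
        + (if i = (⟨0, hn⟩ : Fin n) then (2 - 2^n) - 2^((⟨0, hn⟩ : Fin n) : ℕ) else 0)) :=
        Finset.sum_congr rfl (fun i _ => hsplit i)
    _ = (2^n - 1) + ((2 - 2^n) - 2^((⟨0, hn⟩ : Fin n) : ℕ)) := by
        rw [Finset.sum_add_distrib, hgeom, Finset.sum_ite_eq' Finset.univ]
        simp
    _ = 0 := by
        have h0 : (((⟨0, hn⟩ : Fin n)) : ℕ) = 0 := rfl
        rw [h0]; ring

end BresarSemrlAux

/-- Theorem (Brešar–Šemrl): if `n > 2` and `f` is a 2-central polynomial for `Mₙ(ℂ)`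
(i.e. `f²` is a central polynomial of `Mₙ(ℂ)` while `f` itself is neither a central
polynomial nor a polynomial identity), then the width of `f` in `Mₙ(ℂ)` is at least 3:
some element of the span of `f(Mₙ(ℂ))` is not a linear combination of two elements of
`f(Mₙ(ℂ))`. -/
theorem two_central_polynomial_width_ge_three
    (n : ℕ) (hn : 2 < n) (f : FreeAlgebra ℂ ℕ)
    (hsq_central : ∀ a : ℕ → Matrix (Fin n) (Fin n) ℂ,
      (FreeAlgebra.lift ℂ a f) ^ 2 ∈ Set.center (Matrix (Fin n) (Fin n) ℂ))
    (hsq_not_id : ¬ ∀ a : ℕ → Matrix (Fin n) (Fin n) ℂ, (FreeAlgebra.lift ℂ a f) ^ 2 = 0)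
    (hf_not_central : ¬ ∀ a : ℕ → Matrix (Fin n) (Fin n) ℂ,
      FreeAlgebra.lift ℂ a f ∈ Set.center (Matrix (Fin n) (Fin n) ℂ))
    (hf_not_id : ¬ ∀ a : ℕ → Matrix (Fin n) (Fin n) ℂ, FreeAlgebra.lift ℂ a f = 0) :
    ∃ z ∈ Submodule.span ℂ
        {x : Matrix (Fin n) (Fin n) ℂ | ∃ a : ℕ → Matrix (Fin n) (Fin n) ℂ,
          FreeAlgebra.lift ℂ a f = x},
      ¬ ∃ (c₁ c₂ : ℂ) (s t : Matrix (Fin n) (Fin n) ℂ),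
        (∃ a : ℕ → Matrix (Fin n) (Fin n) ℂ, FreeAlgebra.lift ℂ a f = s) ∧
        (∃ a : ℕ → Matrix (Fin n) (Fin n) ℂ, FreeAlgebra.lift ℂ a f = t) ∧
        z = c₁ • s + c₂ • t := by
  have hn0 : 0 < n := by omega
  have hn3 : 3 ≤ n := hn
  -- a noncentral value of f
  obtain ⟨a₀, ha₀⟩ := not_forall.mp hf_not_central
  have hvImg : FreeAlgebra.lift ℂ a₀ f ∈ BresarSemrlAux.Img n f := ⟨a₀, rfl⟩
  obtain ⟨i, j, hij, hEij⟩ := BresarSemrlAux.exists_basis_in f hn0 hvImg ha₀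
  have hdiff := fun p q => BresarSemrlAux.diag_diff f hn3 hij hEij p q
  -- the witness
  set w : Fin n → ℂ := BresarSemrlAux.wvec n hn0 with hwdef
  have hsum : ∑ i, w i = 0 := BresarSemrlAux.wvec_sum hn3
  have hzmem : Matrix.diagonal w ∈ BresarSemrlAux.Sp n f :=
    BresarSemrlAux.diag_mem f hn0 w hsum hdiff
  refine ⟨Matrix.diagonal w, hzmem, ?_⟩
  rintro ⟨c₁, c₂, s, t, ⟨as, hs⟩, ⟨at', ht⟩, heq⟩
  obtain ⟨α₀, hα⟩ := BresarSemrlAux.central_eq_smul_one hn0 (hsq_central as)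
  obtain ⟨β₀, hβ⟩ := BresarSemrlAux.central_eq_smul_one hn0 (hsq_central at')
  rw [pow_two, hs] at hα
  rw [pow_two, ht] at hβ
  refine BresarSemrlAux.no_two_decomp hn3 w
    (BresarSemrlAux.wvec_ne hn3) (BresarSemrlAux.wvec_no_opp hn3)
    (c₁ • s) (c₂ • t) (c₁ * c₁ * α₀) (c₂ * c₂ * β₀) ?_ ?_ heq
  · rw [Matrix.smul_mul, Matrix.mul_smul, hα, smul_smul, smul_smul, mul_assoc]
  · rw [Matrix.smul_mul, Matrix.mul_smul, hβ, smul_smul, smul_smul, mul_assoc]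
end
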